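/- For a real number q with 0<q<1 and any integer n≥1, ∑_{k=1}^n ((1+q^k)/[k]_q) · ([n choose k]_q / [n+k choose k]_q) · q^{k^2} = ∑_{m=1}^n q^m/[m]_q. -/

import Mathlib

open Finset

/-- q-analogue of a natural number: [m]_q = (1-q^m)/(1-q). -/
noncomputable def qnum (q : ℝ) (m : ℕ) : ℝ := (1 - q ^ m) / (1 - q)

/-- q-Pochhammer (q;q)_n = ∏_{k=0}^{n-1} (1 - q^{k+1}). -/
noncomputable def qPoch (q : ℝ) (n : ℕ) : ℝ := ∏ k ∈ Finset.range n, (1 - q ^ (k + 1))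

/-- Gaussian q-binomial coefficient, 0 when m > n. -/
noncomputable def qbinom (q : ℝ) (n m : ℕ) : ℝ :=
  if m ≤ n then qPoch q n / (qPoch q m * qPoch q (n - m)) else 0

/-- q-multiple harmonic star sum H_n^*[s₁,…,s_m]. -/
noncomputable def qHstar (q : ℝ) : List ℕ → ℕ → ℝ
  | [], _ => 1
  | s :: rest, n => ∑ k ∈ Finset.Icc 1 n, q ^ k / qnum q k ^ s * qHstar q rest k

/-- q-multiple zeta star value ζ_q^*[s₁,…,s_m]. -/
noncomputable def qZetaStar (q : ℝ) : List ℕ → ℝ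
  | [] => 1
  | s :: rest => ∑' k : ℕ, q ^ (k + 1) / qnum q (k + 1) ^ s * qHstar q rest (k + 1)

/-- strict multiple harmonic sum ∑_{n ≥ k₁ > … > k_r ≥ 1} ∏ 1/k_j^{p_j}. -/
noncomputable def Hstrict : List ℕ → ℕ → ℝ
  | [], _ => 1
  | p :: rest, n => ∑ k ∈ Finset.Icc 1 n, (1 : ℝ) / (k : ℝ) ^ p * Hstrict rest (k - 1)

/-- binomial-weighted strict multiple harmonic sum Ĥ_n(p). -/
noncomputable def Hhat : List ℕ → ℕ → ℝ
  | [], _ => 1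
  | p :: rest, n => ∑ k ∈ Finset.Icc 1 n,
      ((n.choose k : ℝ) / ((n + k).choose n)) * ((1 : ℝ) / (k : ℝ) ^ p) * Hstrict rest (k - 1)

/-- ordinary multiple harmonic star sum H_n^*(s₁,…,s_m). -/
noncomputable def HstarO : List ℕ → ℕ → ℝ
  | [], _ => 1
  | s :: rest, n => ∑ k ∈ Finset.Icc 1 n, (1 : ℝ) / (k : ℝ) ^ s * HstarO rest k

/-- ordinary multiple zeta star value. -/
noncomputable def zetaStarO : List ℕ → ℝ
  | [] => 1
  | s :: rest => ∑' k : ℕ, (1 : ℝ) / ((k : ℝ) + 1) ^ s * HstarO rest (k + 1)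

/-- Merge a list of parts according to a comma(true)/plus(false) pattern. -/
def mergeComp : ℕ → List ℕ → List Bool → List ℕ
  | a, [], _ => [a]
  | a, _ :: _, [] => [a]
  | a, b :: t, true :: bs => a :: mergeComp b t bs
  | a, b :: t, false :: bs => mergeComp (a + b) t bs

lemma osp {q : ℝ} (hq0 : 0 < q) (hq1 : q < 1) (j : ℕ) (hj : 1 ≤ j) : 0 < 1 - q ^ j := by
  have h : q ^ j < 1 := pow_lt_one₀ hq0.le hq1 (by omega)
  linarith

lemma qPoch_pos {q : ℝ} (hq0 : 0 < q) (hq1 : q < 1) (n : ℕ) : 0 < qPoch q n := by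
  apply Finset.prod_pos; intro i _; exact osp hq0 hq1 _ (by omega)

lemma qPoch_succ (q : ℝ) (n : ℕ) : qPoch q (n+1) = qPoch q n * (1 - q ^ (n+1)) := by
  simp [qPoch, Finset.prod_range_succ]

lemma qbinom_eq {q : ℝ} {n m : ℕ} (h : m ≤ n) :
    qbinom q n m = qPoch q n / (qPoch q m * qPoch q (n - m)) := if_pos h

lemma key {q : ℝ} (hq0 : 0 < q) (hq1 : q < 1) (n k : ℕ) (hk1 : 1 ≤ k) (hk : k ≤ n + 1) :
    (1 + q ^ k) / qnum q k * (qbinom q (n+1) k / qbinom q (n+1+k) k) * q ^ (k ^ 2)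
    - (1 + q ^ k) / qnum q k * (qbinom q n k / qbinom q (n+k) k) * q ^ (k ^ 2)
    = (1 - q) * q ^ (n+1) / (1 - q ^ (n+1)) ^ 2 *
      ((1 - q ^ (n+1+k)) * q ^ (k*(k-1)) * (qbinom q (n+1) k / qbinom q (n+1+k) k)
       - (1 - q ^ (n+1+(k+1))) * q ^ ((k+1)*k) * (qbinom q (n+1) (k+1) / qbinom q (n+1+(k+1)) (k+1))) := by
  have hq' : (0:ℝ) < 1 - q := by linarith
  rcases Nat.lt_or_ge n k with hlt | hge
  · -- k = n+1
    have hkn : k = n + 1 := by omega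
    subst hkn
    have h0 : qbinom q n (n+1) = 0 := if_neg (by omega)
    have h1 : qbinom q (n+1) (n+1+1) = 0 := if_neg (by omega)
    rw [h0, h1]
    rw [qbinom_eq (le_refl (n+1)), qbinom_eq (by omega : n+1 ≤ n+1+(n+1))]
    have e1 : n + 1 - (n+1) = 0 := by omega
    have e2 : n + 1 + (n+1) - (n+1) = n+1 := by omega
    rw [e1, e2]
    have hP0 : qPoch q 0 = 1 := by simp [qPoch]
    rw [hP0]
    have hPn1 : qPoch q (n+1) ≠ 0 := (qPoch_pos hq0 hq1 _).ne'
    have hP2n2 : qPoch q (n+1+(n+1)) ≠ 0 := (qPoch_pos hq0 hq1 _).ne'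
    have hnum : qnum q (n+1) = (1 - q^(n+1))/(1-q) := rfl
    have h1n : (1:ℝ) - q^(n+1) ≠ 0 := (osp hq0 hq1 _ (by omega)).ne'
    have hfac : (1:ℝ) - q^(n+1+(n+1)) = (1 - q^(n+1)) * (1 + q^(n+1)) := by
      rw [show n+1+(n+1) = 2*(n+1) by ring, pow_mul]; ring
    rw [hnum, hfac]
    simp only [Nat.add_sub_cancel]
    have hexp1 : q ^ ((n+1)^2) = q ^ ((n+1)*n) * q ^ (n+1) := by
      rw [← pow_add]; congr 1; ring
    rw [hexp1]
    field_simp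
    ring
  · -- k ≤ n: write k = l+1, n = l+1+j
    obtain ⟨l, rfl⟩ : ∃ l, k = l + 1 := ⟨k - 1, by omega⟩
    obtain ⟨j, rfl⟩ : ∃ j, n = l + 1 + j := ⟨n - (l+1), by omega⟩
    -- rewrite all qbinoms
    rw [qbinom_eq (by omega : l+1 ≤ l+1+j+1), qbinom_eq (by omega : l+1 ≤ l+1+j+1+(l+1)),
        qbinom_eq (by omega : l+1 ≤ l+1+j), qbinom_eq (by omega : l+1 ≤ l+1+j+(l+1)),
        qbinom_eq (by omega : l+1+1 ≤ l+1+j+1), qbinom_eq (by omega : l+1+1 ≤ l+1+j+1+(l+1+1))]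
    have e1 : l+1+j+1 - (l+1) = j+1 := by omega
    have e2 : l+1+j+1+(l+1) - (l+1) = l+1+j+1 := by omega
    have e3 : l+1+j - (l+1) = j := by omega
    have e4 : l+1+j+(l+1) - (l+1) = l+1+j := by omega
    have e5 : l+1+j+1 - (l+1+1) = j := by omega
    have e6 : l+1+j+1+(l+1+1) - (l+1+1) = l+1+j+1 := by omega
    rw [e1, e2, e3, e4, e5, e6]
    -- rewrite qPoch chains down to qPoch (l+1), qPoch j, qPoch (l+1+j), qPoch (l+1+j+(l+1))
    have pj1 : qPoch q (j+1) = qPoch q j * (1 - q^(j+1)) := qPoch_succ q j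
    have pL1 : qPoch q (l+1+j+1) = qPoch q (l+1+j) * (1 - q^(l+1+j+1)) := qPoch_succ q _
    have pB1 : qPoch q (l+1+j+1+(l+1)) = qPoch q (l+1+j+(l+1)) * (1 - q^(l+1+j+(l+1)+1)) := by
      rw [show l+1+j+1+(l+1) = (l+1+j+(l+1))+1 by ring]; exact qPoch_succ q _
    have pB2 : qPoch q (l+1+j+1+(l+1+1)) =
        qPoch q (l+1+j+(l+1)) * (1 - q^(l+1+j+(l+1)+1)) * (1 - q^(l+1+j+(l+1)+1+1)) := by
      rw [show l+1+j+1+(l+1+1) = (l+1+j+(l+1))+1+1 by ring, qPoch_succ, qPoch_succ]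
    have pl2 : qPoch q (l+1+1) = qPoch q (l+1) * (1 - q^(l+1+1)) := qPoch_succ q _
    rw [pj1, pL1, pB1, pB2, pl2]
    have hnum : qnum q (l+1) = (1 - q^(l+1))/(1-q) := rfl
    rw [hnum]
    -- nonzero facts
    have z1 : qPoch q (l+1) ≠ 0 := (qPoch_pos hq0 hq1 _).ne'
    have z2 : qPoch q j ≠ 0 := (qPoch_pos hq0 hq1 _).ne'
    have z3 : qPoch q (l+1+j) ≠ 0 := (qPoch_pos hq0 hq1 _).ne'
    have z4 : qPoch q (l+1+j+(l+1)) ≠ 0 := (qPoch_pos hq0 hq1 _).ne'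
    have w1 : (1:ℝ) - q^(l+1) ≠ 0 := (osp hq0 hq1 _ (by omega)).ne'
    have w2 : (1:ℝ) - q^(j+1) ≠ 0 := (osp hq0 hq1 _ (by omega)).ne'
    have w3 : (1:ℝ) - q^(l+1+j+1) ≠ 0 := (osp hq0 hq1 _ (by omega)).ne'
    have w4 : (1:ℝ) - q^(l+1+j+(l+1)+1) ≠ 0 := (osp hq0 hq1 _ (by omega)).ne'
    have w5 : (1:ℝ) - q^(l+1+j+(l+1)+1+1) ≠ 0 := (osp hq0 hq1 _ (by omega)).ne'
    have w6 : (1:ℝ) - q^(l+1+1) ≠ 0 := (osp hq0 hq1 _ (by omega)).ne'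
    have w7 : (1:ℝ) - q ≠ 0 := by linarith
    simp only [Nat.add_sub_cancel]
    field_simp
    ring

lemma tele (f : ℕ → ℝ) (n : ℕ) : ∑ k ∈ Icc 1 (n+1), (f k - f (k+1)) = f 1 - f (n+2) := by
  induction n with
  | zero => simp
  | succ n ih =>
    rw [Finset.sum_Icc_succ_top (by omega), ih]; ring_nf


theorem stmt2 (q : ℝ) (hq0 : 0 < q) (hq1 : q < 1) (n : ℕ) (hn : 1 ≤ n) :
    ∑ k ∈ Finset.Icc 1 n,
      (1 + q ^ k) / qnum q k * (qbinom q n k / qbinom q (n + k) k) * q ^ (k ^ 2)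
    = ∑ m ∈ Finset.Icc 1 n, q ^ m / qnum q m := by
  induction n, hn using Nat.le_induction with
  | base =>
    have hq' : (0:ℝ) < 1 - q := by linarith
    have hq2 : (1:ℝ) - q^2 ≠ 0 := (osp hq0 hq1 2 (by omega)).ne'
    simp only [Finset.Icc_self, Finset.sum_singleton]
    simp [qbinom, qnum, qPoch, Finset.prod_range_succ]
    field_simp
    ring
  | succ n hn ih =>
    set g : ℕ → ℝ := fun j =>
      (1 - q ^ (n+1+j)) * q ^ (j*(j-1)) * (qbinom q (n+1) j / qbinom q (n+1+j) j) with hg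
    have hsplit : ∑ k ∈ Icc 1 (n+1),
        (1 + q ^ k) / qnum q k * (qbinom q (n+1) k / qbinom q (n+1+k) k) * q ^ (k ^ 2)
        = ∑ k ∈ Icc 1 (n+1),
            (1 + q ^ k) / qnum q k * (qbinom q n k / qbinom q (n+k) k) * q ^ (k ^ 2)
          + ∑ k ∈ Icc 1 (n+1),
            ((1 + q ^ k) / qnum q k * (qbinom q (n+1) k / qbinom q (n+1+k) k) * q ^ (k ^ 2)
             - (1 + q ^ k) / qnum q k * (qbinom q n k / qbinom q (n+k) k) * q ^ (k ^ 2)) := by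
      rw [← Finset.sum_add_distrib]
      apply Finset.sum_congr rfl; intro x _; ring
    rw [hsplit]
    -- first sum: last term vanishes
    have hfirst : ∑ k ∈ Icc 1 (n+1),
        (1 + q ^ k) / qnum q k * (qbinom q n k / qbinom q (n+k) k) * q ^ (k ^ 2)
        = ∑ k ∈ Icc 1 n,
            (1 + q ^ k) / qnum q k * (qbinom q n k / qbinom q (n+k) k) * q ^ (k ^ 2) := by
      rw [Finset.sum_Icc_succ_top (by omega)]
      have : qbinom q n (n+1) = 0 := if_neg (by omega)
      simp [this]
    -- second sum: telescoping
    have hdiff : ∑ k ∈ Icc 1 (n+1),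
        ((1 + q ^ k) / qnum q k * (qbinom q (n+1) k / qbinom q (n+1+k) k) * q ^ (k ^ 2)
         - (1 + q ^ k) / qnum q k * (qbinom q n k / qbinom q (n+k) k) * q ^ (k ^ 2))
        = (1 - q) * q ^ (n+1) / (1 - q ^ (n+1)) ^ 2 * (g 1 - g (n+2)) := by
      rw [← tele g n, Finset.mul_sum]
      apply Finset.sum_congr rfl
      intro k hk
      simp only [Finset.mem_Icc] at hk
      exact key hq0 hq1 n k hk.1 hk.2
    rw [hfirst, hdiff, ih]
    have hg1 : g 1 = 1 - q ^ (n+1) := by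
      have h1 : qbinom q (n+1) 1 = qPoch q (n+1) / (qPoch q 1 * qPoch q n) := by
        rw [qbinom_eq (by omega)]; norm_num
      have h2 : qbinom q (n+1+1) 1 = qPoch q (n+1+1) / (qPoch q 1 * qPoch q (n+1)) := by
        rw [qbinom_eq (by omega)]; norm_num
      have hP1 : qPoch q (n+1) = qPoch q n * (1 - q^(n+1)) := qPoch_succ q n
      have hP2 : qPoch q (n+1+1) = qPoch q (n+1) * (1 - q^(n+1+1)) := qPoch_succ q (n+1)
      have z1 : qPoch q n ≠ 0 := (qPoch_pos hq0 hq1 _).ne'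
      have z0 : qPoch q 1 ≠ 0 := (qPoch_pos hq0 hq1 _).ne'
      have w1 : (1:ℝ) - q^(n+1) ≠ 0 := (osp hq0 hq1 _ (by omega)).ne'
      have w2 : (1:ℝ) - q^(n+1+1) ≠ 0 := (osp hq0 hq1 _ (by omega)).ne'
      simp only [hg, h1, h2, hP2, hP1]
      field_simp
      ring
    have hg2 : g (n+2) = 0 := by
      have : qbinom q (n+1) (n+2) = 0 := if_neg (by omega)
      simp [hg, this]
    rw [hg1, hg2]
    rw [Finset.sum_Icc_succ_top (le_add_self : 1 ≤ n+1)]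
    have w1 : (1:ℝ) - q^(n+1) ≠ 0 := (osp hq0 hq1 _ (by omega)).ne'
    have hq' : (1:ℝ) - q ≠ 0 := by linarith
    have : qnum q (n+1) = (1 - q^(n+1))/(1-q) := rfl
    rw [this]
    field_simp
    ring
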